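/- Let R be a commutative ring, 𝔗 a torsion theory over R, y₁,…,y_r a finite sequence of elements of R, and M an R-module with M ∈ 𝔗. Then H^i_y(M) ∈ 𝔗 for all i ≥ 0, where H^i_y(M) denotes the i-th Čech cohomology of M with respect to y₁,…,y_r. In particular, every torsion theory is closed under localization: S^{-1}M ∈ 𝔗 for every multiplicatively closed subset S of R. -/

import Mathlib

open CategoryTheory

universe u

noncomputable section

/-- A torsion theory over `R`: a class of `R`-modules closed under isomorphism, submodules,
quotient modules, extensions, and directed colimits (formulated as closure under directed
unions of submodules). -/
structure IsTorsionTheory (R : Type u) [CommRing R] (T : Set (ModuleCat.{u} R)) : Prop where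
  mem_of_iso : ∀ {N N' : ModuleCat.{u} R}, (N ≅ N') → N ∈ T → N' ∈ T
  submodule_mem : ∀ {N : ModuleCat.{u} R}, N ∈ T → ∀ S : Submodule R N,
    ModuleCat.of R S ∈ T
  quotient_mem : ∀ {N : ModuleCat.{u} R}, N ∈ T → ∀ S : Submodule R N,
    ModuleCat.of R (N ⧸ S) ∈ T
  ext_mem : ∀ {N : ModuleCat.{u} R} (S : Submodule R N),
    ModuleCat.of R S ∈ T → ModuleCat.of R (N ⧸ S) ∈ T → N ∈ T
  directed_mem : ∀ {N : ModuleCat.{u} R} {ι : Type u} [Nonempty ι] (S : ι → Submodule R N),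
    Directed (· ≤ ·) S → (∀ i, ModuleCat.of R (S i) ∈ T) → iSup S = ⊤ → N ∈ T

variable {R : Type u} [CommRing R]

/-- The canonical map between localized modules along an inclusion of submonoids. -/
def locMap {S T : Submonoid R} (h : S ≤ T) (M : Type u) [AddCommGroup M]
    [Module R M] : LocalizedModule S M →ₗ[R] LocalizedModule T M :=
  LocalizedModule.lift S (LocalizedModule.mkLinearMap T M)
    (fun s => IsLocalizedModule.map_units (LocalizedModule.mkLinearMap T M) ⟨s.1, h s.2⟩)

/-- The component of the Čech complex of `M` with respect to `x` indexed by a subset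
`s ⊆ {1, …, r}`: the localization of `M` at the products of the `x j`, `j ∈ s`. -/
abbrev cechComponent {r : ℕ} (x : Fin r → R) (M : Type u) [AddCommGroup M] [Module R M]
    (s : Finset (Fin r)) : Type u :=
  LocalizedModule (Submonoid.closure (x '' ↑s)) M

/-- The "outgoing" differential of the Čech complex of `M` with respect to `x₁, …, x_r`. -/
def cechDiff {r : ℕ} (x : Fin r → R) (M : Type u) [AddCommGroup M] [Module R M]
    (i : ℕ) :
    (∀ s : {s : Finset (Fin r) // s.card = i}, cechComponent x M s.1) →ₗ[R]
      (∀ s : {s : Finset (Fin r) // s.card = i + 1}, cechComponent x M s.1) where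
  toFun φ t := ∑ j ∈ t.1.attach,
    ((-1 : R) ^ (t.1.filter (fun k => k < j.1)).card) •
      locMap (Submonoid.closure_mono
          (Set.image_mono (f := x) (Finset.coe_subset.mpr (Finset.erase_subset j.1 t.1)))) M
        (φ ⟨t.1.erase j.1, by simp [Finset.card_erase_of_mem j.2, t.2]⟩)
  map_add' φ ψ := by
    funext t
    simp [Finset.sum_add_distrib, smul_add]
  map_smul' c φ := by
    funext t
    simp [Finset.smul_sum, smul_comm c]

/-- The "incoming" differential of the Čech complex in degree `i`
(its source is trivial when `i = 0`). -/
def cechDiffIn {r : ℕ} (x : Fin r → R) (M : Type u) [AddCommGroup M] [Module R M]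
    (i : ℕ) :
    (∀ s : {s : Finset (Fin r) // s.card + 1 = i}, cechComponent x M s.1) →ₗ[R]
      (∀ s : {s : Finset (Fin r) // s.card = i}, cechComponent x M s.1) where
  toFun φ t := ∑ j ∈ t.1.attach,
    ((-1 : R) ^ (t.1.filter (fun k => k < j.1)).card) •
      locMap (Submonoid.closure_mono
          (Set.image_mono (f := x) (Finset.coe_subset.mpr (Finset.erase_subset j.1 t.1)))) M
        (φ ⟨t.1.erase j.1, by rw [Finset.card_erase_add_one j.2]; exact t.2⟩)
  map_add' φ ψ := by
    funext t
    simp [Finset.sum_add_distrib, smul_add]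
  map_smul' c φ := by
    funext t
    simp [Finset.smul_sum, smul_comm c]

/-- The `i`-th Čech cohomology `H^i_x(M)` of `M` with respect to `x₁, …, x_r`. -/
abbrev cechCohomology {r : ℕ} (x : Fin r → R) (M : Type u) [AddCommGroup M]
    [Module R M] (i : ℕ) : Type u :=
  ↥(LinearMap.ker (cechDiff x M i)) ⧸
    (Submodule.comap (LinearMap.ker (cechDiff x M i)).subtype
      (LinearMap.range (cechDiffIn x M i)))

/-- The `𝔗`-Čech grade of the ideal `(x₁, …, x_r)` on `M`: the infimum of the set of `i`
such that `H^i_x(M) ∉ 𝔗` (with `inf ∅ = +∞`). -/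
def TCgrade (T : Set (ModuleCat.{u} R)) {r : ℕ} (x : Fin r → R) (M : Type u)
    [AddCommGroup M] [Module R M] : ℕ∞ :=
  sInf ((↑· : ℕ → ℕ∞) '' {i | ModuleCat.of R (cechCohomology x M i) ∉ T})


theorem memA (T : Set (ModuleCat.{u} R)) (hT : IsTorsionTheory R T)
    {N P : Type u} [AddCommGroup N] [Module R N] [AddCommGroup P] [Module R P]
    (f : N →ₗ[R] P) (hf : Function.Injective f) (hP : ModuleCat.of R P ∈ T) :
    ModuleCat.of R N ∈ T := by
  have h1 : ModuleCat.of R (LinearMap.range f) ∈ T := hT.submodule_mem hP (LinearMap.range f)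
  exact hT.mem_of_iso (LinearEquiv.ofInjective f hf).symm.toModuleIso h1

theorem memB (T : Set (ModuleCat.{u} R)) (hT : IsTorsionTheory R T)
    {N P : Type u} [AddCommGroup N] [Module R N] [AddCommGroup P] [Module R P]
    (f : N →ₗ[R] P) (hf : Function.Surjective f) (hN : ModuleCat.of R N ∈ T) :
    ModuleCat.of R P ∈ T := by
  have h1 : ModuleCat.of R (N ⧸ LinearMap.ker f) ∈ T := hT.quotient_mem hN (LinearMap.ker f)
  exact hT.mem_of_iso (f.quotKerEquivOfSurjective hf).toModuleIso h1

theorem memProd (T : Set (ModuleCat.{u} R)) (hT : IsTorsionTheory R T)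
    {N P : Type u} [AddCommGroup N] [Module R N] [AddCommGroup P] [Module R P]
    (hN : ModuleCat.of R N ∈ T) (hP : ModuleCat.of R P ∈ T) :
    ModuleCat.of R (N × P) ∈ T := by
  refine hT.ext_mem (LinearMap.ker (LinearMap.snd R N P)) ?_ ?_
  · have h := memB T hT ((LinearMap.inl R N P).rangeRestrict)
      (LinearMap.surjective_rangeRestrict _) hN
    rw [LinearMap.range_inl] at h
    exact h
  · exact memB T hT _ ((LinearMap.snd R N P).quotKerEquivOfSurjective
      (fun p => ⟨(0, p), rfl⟩)).symm.surjective hP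

theorem memZero (T : Set (ModuleCat.{u} R)) (hT : IsTorsionTheory R T)
    {Z N : Type u} [AddCommGroup N] [Module R N] [AddCommGroup Z] [Module R Z]
    [Subsingleton Z] (hN : ModuleCat.of R N ∈ T) : ModuleCat.of R Z ∈ T :=
  memA T hT (0 : Z →ₗ[R] N) (fun a b _ => Subsingleton.elim a b) hN

theorem memPiAux (T : Set (ModuleCat.{u} R)) (hT : IsTorsionTheory R T)
    {W : Type u} [AddCommGroup W] [Module R W] (hW : ModuleCat.of R W ∈ T) (n : ℕ) :
    ∀ (ι : Type u) [Fintype ι] (N : ι → Type u) [∀ i, AddCommGroup (N i)]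
      [∀ i, Module R (N i)], Fintype.card ι = n →
      (∀ i, ModuleCat.of R (N i) ∈ T) → ModuleCat.of R (∀ i, N i) ∈ T := by
  classical
  induction n with
  | zero =>
    intro ι _ N _ _ hn h
    have : IsEmpty ι := Fintype.card_eq_zero_iff.mp hn
    have : Subsingleton (∀ i, N i) := ⟨fun a b => funext fun i => (this.false i).elim⟩
    exact memZero T hT hW
  | succ n ih =>
    intro ι _ N _ _ hn h
    have : Nonempty ι := Fintype.card_pos_iff.mp (by omega)
    obtain ⟨i₀⟩ := this
    let e : Option {b : ι // b ≠ i₀} ≃ ι := Equiv.optionSubtypeNe i₀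
    have hcard : Fintype.card {b : ι // b ≠ i₀} = n := by
      have := Fintype.card_congr e
      simp only [Fintype.card_option] at this
      omega
    have hrest : ModuleCat.of R (∀ b : {b : ι // b ≠ i₀}, N b.1) ∈ T :=
      ih _ _ hcard (fun b => h b.1)
    have hopt : ModuleCat.of R (∀ o : Option {b : ι // b ≠ i₀}, N (e o)) ∈ T := by
      have := memProd T hT (h (e none)) hrest
      exact hT.mem_of_iso
        ((LinearEquiv.piOptionEquivProd (R := R) (M := fun o => N (e o))).symm.toModuleIso) this
    exact hT.mem_of_iso (LinearEquiv.piCongrLeft R N e).toModuleIso hopt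

theorem memPi (T : Set (ModuleCat.{u} R)) (hT : IsTorsionTheory R T)
    {W : Type u} [AddCommGroup W] [Module R W] (hW : ModuleCat.of R W ∈ T)
    (ι : Type u) [Fintype ι] (N : ι → Type u) [∀ i, AddCommGroup (N i)]
    [∀ i, Module R (N i)] (h : ∀ i, ModuleCat.of R (N i) ∈ T) :
    ModuleCat.of R (∀ i, N i) ∈ T :=
  memPiAux T hT hW (Fintype.card ι) ι N rfl h

def ellMap (S : Submonoid R) (M : Type u) [AddCommGroup M] [Module R M] (s : S) :
    M →ₗ[R] LocalizedModule S M :=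
  (LocalizedModule.divBy s).comp (LocalizedModule.mkLinearMap S M)

theorem ellMap_apply (S : Submonoid R) (M : Type u) [AddCommGroup M] [Module R M]
    (s : S) (m : M) : ellMap S M s m = LocalizedModule.mk m s := by
  show LocalizedModule.divBy s (LocalizedModule.mk m 1) = LocalizedModule.mk m s
  rw [LocalizedModule.divBy_apply, LocalizedModule.liftOn_mk, one_mul]

theorem ellMap_mul (S : Submonoid R) (M : Type u) [AddCommGroup M] [Module R M]
    (s t : S) (m : M) : ellMap S M (s * t) ((t : R) • m) = ellMap S M s m := by
  rw [ellMap_apply, ellMap_apply, LocalizedModule.mk_eq]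
  refine ⟨1, ?_⟩
  rw [one_smul, one_smul, Submonoid.smul_def, Submonoid.smul_def, Submonoid.coe_mul, mul_smul]

theorem ellMap_mul' (S : Submonoid R) (M : Type u) [AddCommGroup M] [Module R M]
    (s t : S) (m : M) : ellMap S M (s * t) ((s : R) • m) = ellMap S M t m := by
  rw [mul_comm]; exact ellMap_mul S M t s m

theorem memLoc (T : Set (ModuleCat.{u} R)) (hT : IsTorsionTheory R T)
    {M : Type u} [AddCommGroup M] [Module R M] (hM : ModuleCat.of R M ∈ T)
    (S : Submonoid R) : ModuleCat.of R (LocalizedModule S M) ∈ T := by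
  classical
  haveI : Nonempty S := ⟨1⟩
  refine hT.directed_mem (ι := S) (fun s => LinearMap.range (ellMap S M s)) ?_ ?_ ?_
  · intro s t
    refine ⟨s * t, ?_, ?_⟩
    · rintro x ⟨m, rfl⟩
      exact ⟨(t : R) • m, ellMap_mul S M s t m⟩
    · rintro x ⟨m, rfl⟩
      exact ⟨(s : R) • m, ellMap_mul' S M s t m⟩
  · intro s
    exact memB T hT (ellMap S M s).rangeRestrict (LinearMap.surjective_rangeRestrict _) hM
  · rw [eq_top_iff]
    rintro x -
    exact LocalizedModule.induction_on
      (fun m s => Submodule.mem_iSup_of_mem s ⟨m, ellMap_apply S M s m⟩) x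


/-- **Theorem.** Let `𝔗` be a torsion theory, `y₁, …, y_r` a finite sequence of elements of
`R` and `M ∈ 𝔗`. Then `H^i_y(M) ∈ 𝔗` for all `i ≥ 0`; in particular every torsion theory
is closed under localization: `S⁻¹M ∈ 𝔗` for every multiplicatively closed `S ⊆ R`. -/
theorem cechCohomology_mem_of_mem (T : Set (ModuleCat.{u} R)) (hT : IsTorsionTheory R T)
    {r : ℕ} (y : Fin r → R) (M : Type u) [AddCommGroup M] [Module R M]
    (hM : ModuleCat.of R M ∈ T) :
    (∀ i : ℕ, ModuleCat.of R (cechCohomology y M i) ∈ T) ∧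
      ∀ S : Submonoid R, ModuleCat.of R (LocalizedModule S M) ∈ T := by
  have hloc : ∀ S : Submonoid R, ModuleCat.of R (LocalizedModule S M) ∈ T :=
    memLoc T hT hM
  refine ⟨fun i => ?_, hloc⟩
  classical
  have hPi' : ModuleCat.of R
      (∀ s : ULift.{u} {s : Finset (Fin r) // s.card = i}, cechComponent y M s.down.1) ∈ T :=
    memPi T hT hM (ULift.{u} {s : Finset (Fin r) // s.card = i})
      (fun s => cechComponent y M s.down.1) (fun s => hloc _)
  have hPi : ModuleCat.of R
      (∀ s : {s : Finset (Fin r) // s.card = i}, cechComponent y M s.1) ∈ T :=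
    hT.mem_of_iso
      ((LinearEquiv.piCongrLeft R
        (fun s : ULift.{u} {s : Finset (Fin r) // s.card = i} => cechComponent y M s.down.1)
        Equiv.ulift.symm).symm.toModuleIso) hPi'
  have hker : ModuleCat.of R ↥(LinearMap.ker (cechDiff y M i)) ∈ T :=
    memA T hT (LinearMap.ker (cechDiff y M i)).subtype (Submodule.injective_subtype _) hPi
  exact memB T hT (Submodule.mkQ _) (Submodule.mkQ_surjective _) hker
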